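/- Let n ≥ 2 be an integer and δ ∈ (1/2, 1]. Then sup over positive integers m and X ∈ C(n, m) of P(max_{1 ≤ i < j ≤ n} |X_i − X_j| ≥ δ) is at most 2 times the sup over positive integers m and X ∈ C'(n, m) of P( {max_{1 ≤ i < j ≤ n} |X_i − X_j| ≥ δ} ∩ A ), where A is the event associated to X. -/

import Mathlib

open MeasureTheory

noncomputable section

/-- The event that some pair of the variables differ by at least `δ`. -/
def maxEvent {Ω : Type} {n : ℕ} (X : Fin n → Ω → ℝ) (δ : ℝ) : Set Ω :=
  {ω | ∃ i j : Fin n, i < j ∧ δ ≤ |X i ω - X j ω|}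

/-- `X` is coherent with associated event `A`. -/
def CoherentWith {Ω : Type} [mΩ : MeasurableSpace Ω] (P : Measure Ω) {n : ℕ}
    (X : Fin n → Ω → ℝ) (A : Set Ω) : Prop :=
  ∃ G : Fin n → MeasurableSpace Ω, (∀ i, G i ≤ mΩ) ∧ MeasurableSet A ∧
    ∀ i, X i =ᵐ[P] P[A.indicator (fun _ => (1 : ℝ)) | G i]

/-- `X ∈ C(n, m)` with associated event `A`: each coordinate takes (almost surely)
at most `m` distinct values. -/
def MemCWith {Ω : Type} [mΩ : MeasurableSpace Ω] (P : Measure Ω) {n : ℕ}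
    (X : Fin n → Ω → ℝ) (A : Set Ω) (m : ℕ) : Prop :=
  CoherentWith P X A ∧ ∀ j, ∃ s : Finset ℝ, s.card ≤ m ∧ ∀ᵐ ω ∂P, X j ω ∈ s

/-- `X ∈ C'(n, m)` with associated event `A`: additionally `P(A) = 1/2` and the balance
condition holds. -/
def MemC'With {Ω : Type} [mΩ : MeasurableSpace Ω] (P : Measure Ω) {n : ℕ}
    (X : Fin n → Ω → ℝ) (A : Set Ω) (m : ℕ) : Prop :=
  MemCWith P X A m ∧ P A = 1 / 2 ∧
    ∀ x ∈ Set.Ioc (0 : ℝ) 1,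
      (1 - x) / x * ∑ i : Fin n, (P ({ω | X i ω = x} ∩ A)).toReal =
        ∑ i : Fin n, (P ({ω | X i ω = 1 - x} ∩ A)).toReal

lemma symm_construction {Ω : Type} [mΩ : MeasurableSpace Ω] (P : Measure Ω)
    [IsProbabilityMeasure P] {n m : ℕ} (X : Fin n → Ω → ℝ) (A : Set Ω) (δ : ℝ)
    (hX : MemCWith P X A m) :
    ∃ (Ω' : Type) (mΩ' : MeasurableSpace Ω') (P' : Measure Ω'),
      IsProbabilityMeasure P' ∧ ∃ (X' : Fin n → Ω' → ℝ) (A' : Set Ω'),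
        MemC'With P' X' A' (2 * m) ∧
        (P (maxEvent X δ)).toReal = 2 * (P' (maxEvent X' δ ∩ A')).toReal := by
  obtain ⟨⟨G, hG, hA, hXc⟩, hvals⟩ := hX
  -- notation
  set Y : Fin n → Ω → ℝ := fun i => P[A.indicator (fun _ => (1 : ℝ)) | G i] with hY
  -- the embeddings
  let f : Bool → Ω → Ω × Bool := fun b ω => (ω, b)
  have emb : ∀ b, MeasurableEmbedding (f b) := fun b => measurableEmbedding_prod_mk_right b
  -- the measure
  set P' : Measure (Ω × Bool) :=
    (2⁻¹ : ENNReal) • (P.map (f false)) + (2⁻¹ : ENNReal) • (P.map (f true)) with hP'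
  have P'app : ∀ S : Set (Ω × Bool),
      P' S = 2⁻¹ * P (f false ⁻¹' S) + 2⁻¹ * P (f true ⁻¹' S) := by
    intro S
    rw [hP', Measure.add_apply, Measure.smul_apply, Measure.smul_apply,
      (emb false).map_apply, (emb true).map_apply, smul_eq_mul, smul_eq_mul]
  have tP'app : ∀ S : Set (Ω × Bool),
      (P' S).toReal = 2⁻¹ * (P (f false ⁻¹' S)).toReal + 2⁻¹ * (P (f true ⁻¹' S)).toReal := by
    intro S
    rw [P'app S, ENNReal.toReal_add, ENNReal.toReal_mul, ENNReal.toReal_mul]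
    · norm_num
    · exact ENNReal.mul_ne_top (by norm_num) (measure_ne_top P _)
    · exact ENNReal.mul_ne_top (by norm_num) (measure_ne_top P _)
  have hP'prob : IsProbabilityMeasure P' := by
    constructor
    rw [P'app]
    simp only [Set.preimage_univ, measure_univ]
    norm_num [ENNReal.inv_two_add_inv_two]
  -- ae transfer
  have hae : ∀ p : Ω × Bool → Prop, (∀ᵐ ω ∂P, p (ω, false)) → (∀ᵐ ω ∂P, p (ω, true)) →
      ∀ᵐ q ∂P', p q := by
    intro p h0 h1
    rw [ae_iff] at h0 h1 ⊢
    rw [P'app]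
    have e0 : f false ⁻¹' {q | ¬ p q} = {ω | ¬ p (ω, false)} := rfl
    have e1 : f true ⁻¹' {q | ¬ p q} = {ω | ¬ p (ω, true)} := rfl
    rw [e0, e1, h0, h1]
    simp
  -- the random variables and the event
  set X' : Fin n → Ω × Bool → ℝ := fun i q => if q.2 then 1 - X i q.1 else X i q.1 with hX'
  set Y' : Fin n → Ω × Bool → ℝ := fun i q => if q.2 then 1 - Y i q.1 else Y i q.1 with hY'
  set A' : Set (Ω × Bool) := A ×ˢ ({false} : Set Bool) ∪ Aᶜ ×ˢ ({true} : Set Bool) with hA'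
  have prA'0 : f false ⁻¹' A' = A := by
    ext ω; simp [hA', f]
  have prA'1 : f true ⁻¹' A' = Aᶜ := by
    ext ω; simp [hA', f]
  have hA'meas : MeasurableSet A' :=
    (hA.prod (MeasurableSet.singleton _)).union (hA.compl.prod (MeasurableSet.singleton _))
  -- sub σ-algebras
  set G' : Fin n → MeasurableSpace (Ω × Bool) := fun i => (G i).prod ⊤ with hG'
  have hG'le : ∀ i, G' i ≤ (inferInstance : MeasurableSpace (Ω × Bool)) := by
    intro i
    exact sup_le_sup (MeasurableSpace.comap_mono (hG i)) le_rfl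
  -- measurability helpers
  have hmsnd : ∀ i, @Measurable (Ω × Bool) Bool (G' i) ⊤ Prod.snd := fun i =>
    @measurable_snd _ _ (G i) ⊤
  have hmfst : ∀ i, @Measurable (Ω × Bool) Ω (G' i) (G i) Prod.fst := fun i =>
    @measurable_fst _ _ (G i) ⊤
  have hmf : ∀ i b, @Measurable Ω (Ω × Bool) (G i) (G' i) (f b) := by
    intro i b
    letI := G i
    exact measurable_id.prodMk measurable_const
  have hYm : ∀ i, @Measurable Ω ℝ (G i) _ (Y i) := fun i =>
    stronglyMeasurable_condExp.measurable
  have hY'sm : ∀ i, @StronglyMeasurable (Ω × Bool) ℝ _ (G' i) (Y' i) := by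
    intro i
    letI := G i
    have hm : Measurable (Y' i) := by
      apply Measurable.ite
      · exact measurable_snd (MeasurableSet.singleton true)
      · exact (stronglyMeasurable_condExp.measurable.comp measurable_fst).const_sub 1
      · exact stronglyMeasurable_condExp.measurable.comp measurable_fst
    exact hm.stronglyMeasurable
  -- integrability
  have hIndInt : Integrable (A.indicator fun _ => (1 : ℝ)) P := (integrable_const 1).indicator hA
  have hInd'int : Integrable (A'.indicator fun _ => (1 : ℝ)) P' :=
    (integrable_const 1).indicator hA'meas
  have hY'int : ∀ i, Integrable (Y' i) P' := by
    intro i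
    rw [hP']
    refine Integrable.add_measure ?_ ?_ <;>
      rw [integrable_smul_measure (by norm_num) (by norm_num), (emb _).integrable_map_iff]
    · have : (Y' i) ∘ (f false) = Y i := by funext ω; simp [hY', f]
      rw [this]; exact integrable_condExp
    · have : (Y' i) ∘ (f true) = fun ω => 1 - Y i ω := by funext ω; simp [hY', f]
      rw [this]; exact (integrable_const 1).sub integrable_condExp
  -- set integral decomposition
  have hsetInt : ∀ (g : Ω × Bool → ℝ) (S : Set (Ω × Bool)), Integrable g P' →
      ∫ q in S, g q ∂P' = 2⁻¹ * ∫ ω in f false ⁻¹' S, g (ω, false) ∂P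
        + 2⁻¹ * ∫ ω in f true ⁻¹' S, g (ω, true) ∂P := by
    intro g S hg
    have key : ∀ b, Integrable (g ∘ f b) P := by
      intro b
      have h1 : (2⁻¹ : ENNReal) • (P.map (f b)) ≤ P' := by
        rw [hP']; cases b
        · exact Measure.le_add_right le_rfl
        · exact Measure.le_add_left le_rfl
      have h2 := hg.mono_measure h1
      rw [integrable_smul_measure (by norm_num) (by norm_num),
        (emb b).integrable_map_iff] at h2
      exact h2
    have hres : P'.restrict S
        = (2⁻¹ : ENNReal) • ((P.restrict (f false ⁻¹' S)).map (f false))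
          + (2⁻¹ : ENNReal) • ((P.restrict (f true ⁻¹' S)).map (f true)) := by
      rw [hP', Measure.restrict_add, Measure.restrict_smul, Measure.restrict_smul,
        (emb false).restrict_map, (emb true).restrict_map]
    have ib : ∀ b, Integrable g ((2⁻¹ : ENNReal) • ((P.restrict (f b ⁻¹' S)).map (f b))) := by
      intro b
      rw [integrable_smul_measure (by norm_num) (by norm_num), (emb b).integrable_map_iff]
      exact (key b).restrict
    rw [show (∫ q in S, g q ∂P') = ∫ q, g q ∂(P'.restrict S) from rfl, hres,
      integral_add_measure (ib false) (ib true), integral_smul_measure, integral_smul_measure,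
      (emb false).integral_map, (emb true).integral_map]
    norm_num [f]
  -- coherence for Y'
  have hcoh' : ∀ i, Y' i =ᵐ[P'] P'[A'.indicator fun _ => (1 : ℝ) | G' i] := by
    intro i
    refine ae_eq_condExp_of_forall_setIntegral_eq (hG'le i) hInd'int
      (fun s _ _ => (hY'int i).integrableOn) (fun S hS _ => ?_)
      ((hY'sm i).aestronglyMeasurable)
    have hS0 : MeasurableSet[G i] (f false ⁻¹' S) := hmf i false hS
    have hS1 : MeasurableSet[G i] (f true ⁻¹' S) := hmf i true hS
    rw [hsetInt _ S (hY'int i), hsetInt _ S hInd'int]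
    have e0 : ∀ ω, Y' i (ω, false) = Y i ω := fun ω => by simp [hY']
    have e1 : ∀ ω, Y' i (ω, true) = 1 - Y i ω := fun ω => by simp [hY']
    have eI0 : ∀ ω, A'.indicator (fun _ => (1 : ℝ)) (ω, false)
        = A.indicator (fun _ => (1 : ℝ)) ω := by
      intro ω; by_cases h : ω ∈ A <;> simp [Set.indicator, hA', h]
    have eI1 : ∀ ω, A'.indicator (fun _ => (1 : ℝ)) (ω, true)
        = Aᶜ.indicator (fun _ => (1 : ℝ)) ω := by
      intro ω; by_cases h : ω ∈ A <;> simp [Set.indicator, hA', h]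
    simp_rw [e0, e1, eI0, eI1]
    have t0 : ∫ ω in f false ⁻¹' S, Y i ω ∂P
        = ∫ ω in f false ⁻¹' S, A.indicator (fun _ => (1 : ℝ)) ω ∂P :=
      setIntegral_condExp (hG i) hIndInt hS0
    have t1 : ∫ ω in f true ⁻¹' S, (1 - Y i ω) ∂P
        = ∫ ω in f true ⁻¹' S, Aᶜ.indicator (fun _ => (1 : ℝ)) ω ∂P := by
      have h1A : ∫ ω in f true ⁻¹' S, Y i ω ∂P
          = ∫ ω in f true ⁻¹' S, A.indicator (fun _ => (1 : ℝ)) ω ∂P :=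
        setIntegral_condExp (hG i) hIndInt hS1
      have hsplit : (P (f true ⁻¹' S ∩ A)).toReal + (P (f true ⁻¹' S ∩ Aᶜ)).toReal
          = (P (f true ⁻¹' S)).toReal := by
        rw [← ENNReal.toReal_add (measure_ne_top P _) (measure_ne_top P _), ← Set.diff_eq,
          measure_inter_add_diff _ hA]
      rw [integral_sub (integrable_const 1).integrableOn integrable_condExp.integrableOn, h1A,
        setIntegral_indicator hA, setIntegral_indicator hA.compl, setIntegral_const,
        setIntegral_const, setIntegral_const, smul_eq_mul, smul_eq_mul, smul_eq_mul,
        mul_one, mul_one, mul_one]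
      simp only [measureReal_def]
      linarith
    rw [t0, t1]
  -- X' is a.e. equal to Y'
  have hXY' : ∀ i, X' i =ᵐ[P'] Y' i := by
    intro i
    apply hae (fun q => X' i q = Y' i q)
    · filter_upwards [hXc i] with ω h
      simp [hX', hY', h, hY]
    · filter_upwards [hXc i] with ω h
      simp [hX', hY', h, hY]
  -- values
  have hvals' : ∀ j, ∃ s : Finset ℝ, s.card ≤ 2 * m ∧ ∀ᵐ q ∂P', X' j q ∈ s := by
    intro j
    obtain ⟨s, hcard, hs⟩ := hvals j
    refine ⟨s ∪ s.image (fun x => 1 - x), ?_, ?_⟩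
    · calc (s ∪ s.image (fun x => 1 - x)).card ≤ s.card + (s.image (fun x => 1 - x)).card :=
            Finset.card_union_le _ _
        _ ≤ m + m := add_le_add hcard (le_trans Finset.card_image_le hcard)
        _ = 2 * m := by ring
    · apply hae (fun q => X' j q ∈ s ∪ s.image (fun x => 1 - x))
      · filter_upwards [hs] with ω h
        simp only [hX']
        simp only [Bool.false_eq_true, if_false, Finset.mem_union]
        exact Or.inl h
      · filter_upwards [hs] with ω h
        simp only [hX']
        simp only [if_true, Finset.mem_union]
        exact Or.inr (Finset.mem_image_of_mem _ h)
  -- P' A' = 1/2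
  have hPA' : P' A' = 1 / 2 := by
    rw [P'app, prA'0, prA'1, prob_compl_eq_one_sub hA, ← mul_add, add_comm,
      tsub_add_cancel_of_le prob_le_one, mul_one, one_div]
  -- key identities
  have hkey : ∀ i (y : ℝ), (P ({ω | X i ω = y} ∩ A)).toReal
      = y * (P {ω | X i ω = y}).toReal := by
    intro i y
    set T := Y i ⁻¹' {y} with hT
    have hTmG : MeasurableSet[G i] T := (hYm i) (measurableSet_singleton y)
    have hTm : MeasurableSet T := hG i _ hTmG
    have hsetae : {ω | X i ω = y} =ᵐ[P] T := by
      rw [Filter.eventuallyEq_set]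
      filter_upwards [hXc i] with ω h
      simp [hT, Set.mem_preimage, Set.mem_singleton_iff, h, hY]
    have h1 : P ({ω | X i ω = y} ∩ A) = P (T ∩ A) :=
      measure_congr (hsetae.inter (Filter.EventuallyEq.refl _ _))
    have h2 : P {ω | X i ω = y} = P T := measure_congr hsetae
    have h3 : ∫ ω in T, A.indicator (fun _ => (1 : ℝ)) ω ∂P = (P (T ∩ A)).toReal := by
      rw [setIntegral_indicator hA, setIntegral_const, smul_eq_mul, mul_one]
      rfl
    have h4 : ∫ ω in T, Y i ω ∂P = y * (P T).toReal := by
      rw [setIntegral_congr_fun hTm (fun ω hω => hω), setIntegral_const, smul_eq_mul, mul_comm]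
      rfl
    have h5 : ∫ ω in T, Y i ω ∂P = ∫ ω in T, A.indicator (fun _ => (1 : ℝ)) ω ∂P :=
      setIntegral_condExp (hG i) hIndInt hTmG
    rw [h1, h2, ← h3, ← h5, h4]
  have hcompl : ∀ i (y : ℝ), (P ({ω | X i ω = y} ∩ Aᶜ)).toReal
      = (1 - y) * (P {ω | X i ω = y}).toReal := by
    intro i y
    have hsplit : (P ({ω | X i ω = y} ∩ A)).toReal + (P ({ω | X i ω = y} ∩ Aᶜ)).toReal
        = (P {ω | X i ω = y}).toReal := by
      rw [← ENNReal.toReal_add (measure_ne_top P _) (measure_ne_top P _), ← Set.diff_eq,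
        measure_inter_add_diff _ hA]
    have h := hkey i y
    nlinarith [hsplit, h]
  -- balance condition
  have hbal : ∀ x ∈ Set.Ioc (0 : ℝ) 1,
      (1 - x) / x * ∑ i : Fin n, (P' ({q | X' i q = x} ∩ A')).toReal
        = ∑ i : Fin n, (P' ({q | X' i q = 1 - x} ∩ A')).toReal := by
    intro x hx
    have hx0 : x ≠ 0 := ne_of_gt hx.1
    have e1 : ∀ i, (P' ({q | X' i q = x} ∩ A')).toReal
        = 2⁻¹ * (x * (P {ω | X i ω = x}).toReal + x * (P {ω | X i ω = 1 - x}).toReal) := by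
      intro i
      have p0 : f false ⁻¹' ({q | X' i q = x} ∩ A') = {ω | X i ω = x} ∩ A := by
        ext ω; simp [hX', hA', f]
      have p1 : f true ⁻¹' ({q | X' i q = x} ∩ A') = {ω | X i ω = 1 - x} ∩ Aᶜ := by
        ext ω
        simp only [hX', hA', f, Set.mem_preimage, Set.mem_inter_iff, Set.mem_setOf_eq,
          Set.mem_union, Set.mem_prod, Set.mem_singleton_iff, Set.mem_compl_iff, if_true]
        constructor
        · rintro ⟨h1, h2⟩
          simp at h2
          exact ⟨by linarith, h2⟩
        · rintro ⟨h1, h2⟩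
          refine ⟨by linarith, ?_⟩
          simp [h2]
      rw [tP'app, p0, p1, hkey i x, hcompl i (1 - x)]
      ring
    have e2 : ∀ i, (P' ({q | X' i q = 1 - x} ∩ A')).toReal
        = 2⁻¹ * ((1 - x) * (P {ω | X i ω = 1 - x}).toReal
            + (1 - x) * (P {ω | X i ω = x}).toReal) := by
      intro i
      have p0 : f false ⁻¹' ({q | X' i q = 1 - x} ∩ A') = {ω | X i ω = 1 - x} ∩ A := by
        ext ω; simp [hX', hA', f]
      have p1 : f true ⁻¹' ({q | X' i q = 1 - x} ∩ A') = {ω | X i ω = x} ∩ Aᶜ := by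
        ext ω
        simp only [hX', hA', f, Set.mem_preimage, Set.mem_inter_iff, Set.mem_setOf_eq,
          Set.mem_union, Set.mem_prod, Set.mem_singleton_iff, Set.mem_compl_iff, if_true]
        constructor
        · rintro ⟨h1, h2⟩
          simp at h2
          exact ⟨by linarith, h2⟩
        · rintro ⟨h1, h2⟩
          refine ⟨by linarith, ?_⟩
          simp [h2]
      rw [tP'app, p0, p1, hkey i (1 - x), hcompl i x]
      ring
    have L : ∑ i : Fin n, (P' ({q | X' i q = x} ∩ A')).toReal
        = ∑ i : Fin n, 2⁻¹ * (x * (P {ω | X i ω = x}).toReal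
            + x * (P {ω | X i ω = 1 - x}).toReal) :=
      Finset.sum_congr rfl fun i _ => e1 i
    have R : ∑ i : Fin n, (P' ({q | X' i q = 1 - x} ∩ A')).toReal
        = ∑ i : Fin n, 2⁻¹ * ((1 - x) * (P {ω | X i ω = 1 - x}).toReal
            + (1 - x) * (P {ω | X i ω = x}).toReal) :=
      Finset.sum_congr rfl fun i _ => e2 i
    rw [L, R, Finset.mul_sum]
    refine Finset.sum_congr rfl fun i _ => ?_
    field_simp
    ring
  -- the maxEvent identity
  have habs : ∀ a b : ℝ, |1 - a - (1 - b)| = |a - b| := by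
    intro a b
    rw [show (1 : ℝ) - a - (1 - b) = -(a - b) by ring, abs_neg]
  have pmax0 : f false ⁻¹' (maxEvent X' δ) = maxEvent X δ := by
    ext ω; simp [maxEvent, hX', f]
  have pmax1 : f true ⁻¹' (maxEvent X' δ) = maxEvent X δ := by
    ext ω
    simp only [maxEvent, Set.mem_preimage, Set.mem_setOf_eq, hX', f, if_true]
    constructor
    · rintro ⟨i, j, hij, h⟩
      exact ⟨i, j, hij, by rwa [habs] at h⟩
    · rintro ⟨i, j, hij, h⟩
      exact ⟨i, j, hij, by rwa [habs]⟩
  have hsplitM : (P (maxEvent X δ ∩ A)).toReal + (P (maxEvent X δ ∩ Aᶜ)).toReal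
      = (P (maxEvent X δ)).toReal := by
    rw [← ENNReal.toReal_add (measure_ne_top P _) (measure_ne_top P _), ← Set.diff_eq,
      measure_inter_add_diff _ hA]
  have hfin : (P (maxEvent X δ)).toReal = 2 * (P' (maxEvent X' δ ∩ A')).toReal := by
    rw [tP'app, Set.preimage_inter, Set.preimage_inter, pmax0, pmax1, prA'0, prA'1]
    linarith
  exact ⟨Ω × Bool, inferInstance, P', hP'prob, X', A',
    ⟨⟨⟨G', hG'le, hA'meas, fun i => (hXY' i).trans (hcoh' i)⟩, hvals'⟩, hPA', hbal⟩, hfin⟩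

theorem symmetrization_reduction (n : ℕ) (hn : 2 ≤ n) (δ : ℝ)
    (hδ : δ ∈ Set.Ioc (1 / 2 : ℝ) 1) :
    sSup {p : ℝ | ∃ (Ω : Type) (mΩ : MeasurableSpace Ω) (P : Measure Ω),
        IsProbabilityMeasure P ∧ ∃ (m : ℕ) (X : Fin n → Ω → ℝ) (A : Set Ω),
          1 ≤ m ∧ MemCWith P X A m ∧ p = (P (maxEvent X δ)).toReal} ≤
      2 * sSup {p : ℝ | ∃ (Ω : Type) (mΩ : MeasurableSpace Ω) (P : Measure Ω),
        IsProbabilityMeasure P ∧ ∃ (m : ℕ) (X : Fin n → Ω → ℝ) (A : Set Ω),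
          1 ≤ m ∧ MemC'With P X A m ∧ p = (P (maxEvent X δ ∩ A)).toReal} := by
  set S₂ : Set ℝ := {p : ℝ | ∃ (Ω : Type) (mΩ : MeasurableSpace Ω) (P : Measure Ω),
        IsProbabilityMeasure P ∧ ∃ (m : ℕ) (X : Fin n → Ω → ℝ) (A : Set Ω),
          1 ≤ m ∧ MemC'With P X A m ∧ p = (P (maxEvent X δ ∩ A)).toReal} with hS₂
  have hbdd : BddAbove S₂ := by
    refine ⟨1, fun r hr => ?_⟩
    obtain ⟨Ω, mΩ, P, hP, m, Xv, A, hm, hmem, rfl⟩ := hr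
    calc (P (maxEvent Xv δ ∩ A)).toReal ≤ (1 : ENNReal).toReal :=
          ENNReal.toReal_mono (by norm_num) prob_le_one
      _ = 1 := by norm_num
  have hnn : (0 : ℝ) ≤ 2 * sSup S₂ := by
    refine mul_nonneg (by norm_num) (Real.sSup_nonneg fun x hx => ?_)
    obtain ⟨Ω, mΩ, P, hP, m, Xv, A, hm, hmem, rfl⟩ := hx
    exact ENNReal.toReal_nonneg
  refine Real.sSup_le (fun p hp => ?_) hnn
  obtain ⟨Ω, mΩ, P, hP, m, Xv, A, hm, hmem, rfl⟩ := hp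
  obtain ⟨Ω', mΩ', P', hP', X', A', hmem', heq⟩ := symm_construction P Xv A δ hmem
  have hq : (P' (maxEvent X' δ ∩ A')).toReal ∈ S₂ :=
    ⟨Ω', mΩ', P', hP', 2 * m, X', A', by omega, hmem', rfl⟩
  rw [heq]
  exact mul_le_mul_of_nonneg_left (le_csSup hbdd hq) (by norm_num)

end
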